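/- For b > 2/π, the equation λ = b·tanh(λπ/2) has exactly one solution with λ > 0; for 0 < b ≤ 2/π there is no positive solution. -/

import Mathlib

open Real

lemma myContinuous_tanh : Continuous Real.tanh := by
  have : Real.tanh = fun x => Real.sinh x / Real.cosh x :=
    funext fun x => Real.tanh_eq_sinh_div_cosh x
  rw [this]
  exact Real.continuous_sinh.div Real.continuous_cosh fun x => (Real.cosh_pos x).ne'

lemma myHasDerivAt_tanh (x : ℝ) : HasDerivAt Real.tanh (1 / Real.cosh x ^ 2) x := by
  have h : HasDerivAt (fun x => Real.sinh x / Real.cosh x)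
      ((Real.cosh x * Real.cosh x - Real.sinh x * Real.sinh x) / Real.cosh x ^ 2) x :=
    ((Real.hasDerivAt_sinh x).div (Real.hasDerivAt_cosh x) (Real.cosh_pos x).ne')
  have : Real.tanh = fun x => Real.sinh x / Real.cosh x :=
    funext fun x => Real.tanh_eq_sinh_div_cosh x
  rw [this]
  convert h using 1
  have := Real.cosh_sq_sub_sinh_sq x
  rw [div_left_inj' (by positivity)]
  nlinarith [Real.cosh_sq_sub_sinh_sq x]

lemma myDeriv_tanh : deriv Real.tanh = fun x => 1 / Real.cosh x ^ 2 :=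
  funext fun x => (myHasDerivAt_tanh x).deriv

lemma tanh_strictConcaveOn : StrictConcaveOn ℝ (Set.Ici (0:ℝ)) Real.tanh := by
  apply strictConcaveOn_of_deriv2_neg (convex_Ici 0) myContinuous_tanh.continuousOn
  intro x hx
  rw [interior_Ici] at hx
  have hx0 : 0 < x := hx
  have hc : HasDerivAt (fun y => 1 / Real.cosh y ^ 2)
      (-(2 * Real.cosh x ^ 1 * Real.sinh x) / (Real.cosh x ^ 2) ^ 2) x := by
    simpa [one_div, Pi.inv_def] using (((Real.hasDerivAt_cosh x).fun_pow 2).inv (pow_ne_zero 2 (Real.cosh_pos x).ne'))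
  have hd2 : deriv^[2] Real.tanh x
      = -(2 * Real.cosh x ^ 1 * Real.sinh x) / (Real.cosh x ^ 2) ^ 2 := by
    simp only [Function.iterate_succ, Function.iterate_zero, Function.comp_apply, id]
    rw [myDeriv_tanh]
    exact hc.deriv
  rw [hd2]
  have h1 := Real.cosh_pos x
  have h2 : 0 < Real.sinh x := Real.sinh_pos_iff.2 hx0
  have : 0 < 2 * Real.cosh x ^ 1 * Real.sinh x := by positivity
  exact div_neg_of_neg_of_pos (by linarith) (by positivity)

/-- tanh x / x is strictly antitone on (0, ∞). -/
lemma tanh_ratio_strictAnti : StrictAntiOn (fun x => Real.tanh x / x) (Set.Ioi (0:ℝ)) := by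
  intro x hx y hy hxy
  have hx0 : 0 < x := hx
  have hy0 : 0 < y := hy
  have key : Real.tanh y * x < Real.tanh x * y := by
    have h := tanh_strictConcaveOn.2 (Set.self_mem_Ici) (Set.mem_Ici.2 hy0.le)
      (ne_of_lt hy0)
      (show (0:ℝ) < 1 - x/y by have : x/y < 1 := (div_lt_one hy0).2 hxy; linarith)
      (show (0:ℝ) < x/y by positivity)
      (show (1 - x/y) + x/y = 1 by ring)
    rw [smul_eq_mul, smul_eq_mul, smul_eq_mul, smul_eq_mul, Real.tanh_zero] at h
    have harg : (1 - x/y) * 0 + x/y * y = x := by field_simp; ring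
    rw [harg] at h
    have h' : x/y * Real.tanh y < Real.tanh x := by linarith
    have h2 := mul_lt_mul_of_pos_right h' hy0
    have h3 : x/y * Real.tanh y * y = Real.tanh y * x := by field_simp
    linarith [h3 ▸ h2]
  show Real.tanh y / y < Real.tanh x / x
  rw [div_lt_div_iff₀ hy0 hx0]
  linarith

lemma tanh_ratio_tendsto : Filter.Tendsto (fun x => Real.tanh x / x)
    (nhdsWithin 0 (Set.Ioi 0)) (nhds 1) := by
  have h : HasDerivAt Real.tanh 1 0 := by simpa using myHasDerivAt_tanh 0
  have h2 := (h.hasDerivWithinAt (s := Set.Ioi 0))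
  rw [hasDerivWithinAt_iff_tendsto_slope] at h2
  have hsub : nhdsWithin (0:ℝ) (Set.Ioi 0 \ {0}) = nhdsWithin 0 (Set.Ioi 0) := by
    congr 1
    ext z
    simp only [Set.mem_diff, Set.mem_Ioi, Set.mem_singleton_iff]
    exact ⟨fun h => h.1, fun h => ⟨h, ne_of_gt h⟩⟩
  rw [hsub] at h2
  refine h2.congr' ?_
  filter_upwards [self_mem_nhdsWithin] with z hz
  have hz0 : z ≠ 0 := ne_of_gt hz
  simp [slope, Real.tanh_zero, hz0, div_eq_inv_mul]

lemma tanh_ratio_lt_one {x : ℝ} (hx : 0 < x) : Real.tanh x / x < 1 := by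
  have half : Real.tanh (x/2) / (x/2) ≤ 1 := by
    refine ge_of_tendsto tanh_ratio_tendsto ?_
    have hmem : Set.Ioo (0:ℝ) (x/2) ∈ nhdsWithin (0:ℝ) (Set.Ioi 0) :=
      Ioo_mem_nhdsGT_of_mem ⟨le_refl _, by linarith⟩
    filter_upwards [hmem] with w hw
    exact (tanh_ratio_strictAnti hw.1 (Set.mem_Ioi.2 (by linarith [hw.2])) hw.2).le
  have h3 : Real.tanh x / x < Real.tanh (x/2) / (x/2) :=
    tanh_ratio_strictAnti (Set.mem_Ioi.2 (by linarith)) (Set.mem_Ioi.2 hx) (by linarith)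
  linarith

lemma tanh_lt_one' (x : ℝ) : Real.tanh x < 1 := by
  rw [Real.tanh_eq_sinh_div_cosh, div_lt_one (Real.cosh_pos x)]
  exact Real.sinh_lt_cosh x

theorem stmt_6 (b : ℝ) :
    (2 / π < b → ∃! l : ℝ, 0 < l ∧ l = b * Real.tanh (l * π / 2)) ∧
    (0 < b → b ≤ 2 / π → ¬∃ l : ℝ, 0 < l ∧ l = b * Real.tanh (l * π / 2)) := by
  have hπ : 0 < π := Real.pi_pos
  constructor
  · intro hb
    have hb0 : 0 < b := lt_trans (by positivity) hb
    set c : ℝ := 2 / (b * π) with hc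
    have hc0 : 0 < c := by positivity
    have hc1 : c < 1 := by
      rw [hc, div_lt_one (by positivity)]
      calc (2:ℝ) = (2/π) * π := by field_simp
      _ < b * π := mul_lt_mul_of_pos_right hb hπ
    obtain ⟨x₁, hx₁pos, hx₁⟩ : ∃ x₁ > 0, c < Real.tanh x₁ / x₁ := by
      have hev : ∀ᶠ w in nhdsWithin (0:ℝ) (Set.Ioi 0), c < Real.tanh w / w :=
        tanh_ratio_tendsto.eventually (eventually_gt_nhds hc1)
      have : (nhdsWithin (0:ℝ) (Set.Ioi 0)).NeBot := nhdsGT_neBot 0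
      obtain ⟨w, hw1, hw2⟩ := (hev.and self_mem_nhdsWithin).exists
      exact ⟨w, hw2, hw1⟩
    set x₂ : ℝ := max (x₁ + 1) (1/c) with hx₂def
    have hx₂pos : 0 < x₂ := lt_of_lt_of_le (by linarith) (le_max_left _ _)
    have hx₁₂ : x₁ ≤ x₂ := le_trans (by linarith) (le_max_left _ _)
    have h1 : Real.tanh x₂ / x₂ < 1 / x₂ := by
      rw [div_lt_div_iff₀ hx₂pos hx₂pos]
      nlinarith [tanh_lt_one' x₂]
    have h2 : 1/x₂ ≤ c := by
      rw [div_le_iff₀ hx₂pos]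
      have h3 := mul_le_mul_of_nonneg_left (le_max_right (x₁+1) (1/c)) hc0.le
      rw [mul_one_div, div_self hc0.ne'] at h3
      linarith
    have hx₂ : Real.tanh x₂ / x₂ < c := lt_of_lt_of_le h1 h2
    have hcont : ContinuousOn (fun x => Real.tanh x / x) (Set.Icc x₁ x₂) := by
      apply myContinuous_tanh.continuousOn.div continuousOn_id
      exact fun z hz => ne_of_gt (lt_of_lt_of_le hx₁pos hz.1)
    obtain ⟨x, hxmem, hfx⟩ := intermediate_value_Icc' hx₁₂ hcont ⟨hx₂.le, hx₁.le⟩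
    have hx0 : 0 < x := lt_of_lt_of_le hx₁pos hxmem.1
    -- the solution
    refine ⟨2 * x / π, ⟨by positivity, ?_⟩, ?_⟩
    · have harg : 2 * x / π * π / 2 = x := by field_simp
      rw [harg]
      have hfx' : Real.tanh x / x = c := hfx
      rw [div_eq_iff hx0.ne'] at hfx'
      rw [hfx', hc]
      field_simp
    · rintro l' ⟨hl', heq'⟩
      have hx' : 0 < l' * π / 2 := by positivity
      have ht : Real.tanh (l' * π / 2) = l' / b := by
        field_simp
        linarith [heq']
      have hr' : Real.tanh (l' * π / 2) / (l' * π / 2) = c := by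
        rw [ht, hc]
        field_simp
      have hfx' : Real.tanh x / x = c := hfx
      have heqx : l' * π / 2 = x :=
        tanh_ratio_strictAnti.injOn (Set.mem_Ioi.2 hx') (Set.mem_Ioi.2 hx0)
          (by show Real.tanh (l' * π / 2) / (l' * π / 2) = Real.tanh x / x
              rw [hr', hfx'])
      field_simp
      linarith
  · rintro hb0 hb ⟨l, hl, heq⟩
    have hx : 0 < l * π / 2 := by positivity
    have hr := tanh_ratio_lt_one hx
    have htanh : Real.tanh (l * π / 2) = l / b := by
      field_simp at heq ⊢; linarith
    rw [htanh] at hr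
    have hbπ : b * π ≤ 2 := by
      calc b * π ≤ (2/π) * π := mul_le_mul_of_nonneg_right hb hπ.le
      _ = 2 := by field_simp
    have hrw : l / b / (l * π / 2) = 2 / (b * π) := by
      field_simp
    rw [hrw] at hr
    have : (1:ℝ) ≤ 2 / (b*π) := by
      rw [le_div_iff₀ (by positivity)]; linarith
    linarith
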